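/- Let Δ = {α_{i_1},…,α_{i_{n+1}}} be an n-simplex (the α's affinely independent in ℝ^n) and let N_Δ ∈ ℝ^{n×(n+1)} be a matrix whose kernel is one-dimensional and meets the positive orthant ℝ^{n+1}_{>0} (i.e. N positively decorates Δ). Then the system N_Δ x^{A_Δ} = 0, where A_Δ has columns α_{i_1},…,α_{i_{n+1}}, has exactly one solution in ℝ^n_{>0}, and this solution is non-degenerate (the Jacobian at it is invertible). -/

import Mathlib

open Matrix Finset Real

lemma stmt16_det_ne_zero {n : ℕ} (α : Fin (n + 1) → (Fin n → ℝ))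
    (haff : AffineIndependent ℝ α) :
    (Matrix.of fun r k : Fin n => α r.succ k - α 0 k).det ≠ 0 := by
  intro hdet
  obtain ⟨g, hg0, hg⟩ := (Matrix.exists_vecMul_eq_zero_iff).2 hdet
  have hli := (affineIndependent_iff_linearIndependent_vsub ℝ α 0).1 haff
  have hli2 : LinearIndependent ℝ (fun r : Fin n => α r.succ - α 0) := by
    have heq : (fun r : Fin n => α r.succ - α 0) =
        (fun j : {j : Fin (n+1) // j ≠ 0} => α j -ᵥ α 0) ∘
          (fun r : Fin n => (⟨r.succ, Fin.succ_ne_zero r⟩ : {j : Fin (n+1) // j ≠ 0})) := rfl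
    rw [heq]
    exact hli.comp _ (fun a b hab => by
      have := congrArg Subtype.val hab
      simpa [Fin.succ_inj] using this)
  apply hg0
  have hzero : ∑ r, g r • (α r.succ - α 0) = 0 := by
    funext k
    have := congrFun hg k
    simpa [Matrix.vecMul, dotProduct, smul_eq_mul, mul_sub,
      Finset.sum_apply, Pi.sub_apply] using this
  have := Fintype.linearIndependent_iff.1 hli2 g hzero
  funext r
  exact this r

/-- Let `Δ = {α₁,…,α_{n+1}}` be an `n`-simplex (affinely independent
points of `ℝ^n`) and `N_Δ ∈ ℝ^{n×(n+1)}` a matrix whose kernel is one-dimensional and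
meets the positive orthant (i.e. `N` positively decorates `Δ`). Then the system
`N_Δ x^{A_Δ} = 0` has exactly one solution in `ℝ^n_{>0}`, and this solution is
non-degenerate: the Jacobian (Fréchet derivative) of `x ↦ N_Δ x^{A_Δ}` there is
invertible. -/
theorem stmt16 {n : ℕ} (α : Fin (n + 1) → (Fin n → ℝ))
    (haff : AffineIndependent ℝ α)
    (N : Matrix (Fin n) (Fin (n + 1)) ℝ)
    (v : Fin (n + 1) → ℝ) (hv : ∀ j, 0 < v j) (hvker : N.mulVec v = 0)
    (hker : ∀ u : Fin (n + 1) → ℝ, N.mulVec u = 0 → ∃ c : ℝ, u = c • v) :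
    let F : (Fin n → ℝ) → (Fin n → ℝ) :=
      fun x i => ∑ j, N i j * ∏ k, x k ^ α j k
    (∃! x : Fin n → ℝ, (∀ k, 0 < x k) ∧ F x = 0) ∧
    (∀ x : Fin n → ℝ, (∀ k, 0 < x k) → F x = 0 →
      LinearMap.det ((fderiv ℝ F x : (Fin n → ℝ) →L[ℝ] (Fin n → ℝ)) :
        (Fin n → ℝ) →ₗ[ℝ] (Fin n → ℝ)) ≠ 0) := by
  intro F
  classical
  set D : Matrix (Fin n) (Fin n) ℝ := Matrix.of fun r k => α r.succ k - α 0 k with hD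
  have hdet : D.det ≠ 0 := stmt16_det_ne_zero α haff
  have hDunit : IsUnit D.det := isUnit_iff_ne_zero.2 hdet
  have hDinj : ∀ z : Fin n → ℝ, D.mulVec z = 0 → z = 0 := by
    intro z hz
    by_contra hz0
    exact hdet ((Matrix.exists_mulVec_eq_zero_iff).1 ⟨z, hz0, hz⟩)
  set b : Fin n → ℝ := fun r => Real.log (v r.succ) - Real.log (v 0) with hb
  set m : (Fin n → ℝ) → Fin (n + 1) → ℝ := fun x j => ∏ k, x k ^ α j k with hm
  have hFm : ∀ x, F x = N.mulVec (m x) := fun x => rfl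
  have hmpos : ∀ x : Fin n → ℝ, (∀ k, 0 < x k) → ∀ j, 0 < m x j := fun x hx j =>
    Finset.prod_pos fun k _ => Real.rpow_pos_of_pos (hx k) _
  have hmexp : ∀ x : Fin n → ℝ, (∀ k, 0 < x k) → ∀ j,
      m x j = Real.exp (∑ k, α j k * Real.log (x k)) := by
    intro x hx j
    rw [Real.exp_sum]
    refine Finset.prod_congr rfl fun k _ => ?_
    rw [Real.rpow_def_of_pos (hx k), mul_comm]
  have hchar : ∀ x : Fin n → ℝ, (∀ k, 0 < x k) → F x = 0 →
      ∃ c : ℝ, 0 < c ∧ m x = c • v ∧ D.mulVec (fun k => Real.log (x k)) = b := by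
    intro x hx hFx
    obtain ⟨c, hc⟩ := hker (m x) (by rw [← hFm x, hFx])
    have hmc : ∀ j, m x j = c * v j := fun j => by rw [hc]; rfl
    have hc0 : 0 < c := by
      have h1 := hmpos x hx 0
      rw [hmc 0] at h1
      nlinarith [hv 0]
    refine ⟨c, hc0, hc, ?_⟩
    have hlog : ∀ j, ∑ k, α j k * Real.log (x k) = Real.log c + Real.log (v j) := by
      intro j
      have h2 : Real.exp (∑ k, α j k * Real.log (x k)) = c * v j := by
        rw [← hmexp x hx j, hmc j]
      have h3 := congrArg Real.log h2
      rw [Real.log_exp, Real.log_mul (ne_of_gt hc0) (ne_of_gt (hv j))] at h3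
      exact h3
    funext r
    have h4 : D.mulVec (fun k => Real.log (x k)) r
        = (∑ k, α r.succ k * Real.log (x k)) - ∑ k, α 0 k * Real.log (x k) := by
      simp [hD, Matrix.mulVec, dotProduct, sub_mul, Finset.sum_sub_distrib]
    rw [h4, hlog, hlog, hb]
    ring
  set y0 : Fin n → ℝ := D⁻¹.mulVec b with hy0
  have hy0b : D.mulVec y0 = b := by
    rw [hy0, Matrix.mulVec_mulVec, Matrix.mul_nonsing_inv _ hDunit, Matrix.one_mulVec]
  set x0 : Fin n → ℝ := fun k => Real.exp (y0 k) with hx0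
  have hx0pos : ∀ k, 0 < x0 k := fun k => Real.exp_pos _
  have hlogx0 : ∀ k, Real.log (x0 k) = y0 k := fun k => Real.log_exp _
  set t : ℝ := (∑ k, α 0 k * y0 k) - Real.log (v 0) with ht
  have hj : ∀ j, ∑ k, α j k * y0 k = t + Real.log (v j) := by
    intro j
    induction j using Fin.cases with
    | zero => rw [ht]; ring
    | succ r =>
      have h5 := congrFun hy0b r
      have h6 : D.mulVec y0 r
          = (∑ k, α r.succ k * y0 k) - ∑ k, α 0 k * y0 k := by
        simp [hD, Matrix.mulVec, dotProduct, sub_mul, Finset.sum_sub_distrib]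
      rw [h6, hb] at h5
      simp only at h5
      rw [ht]
      linarith
  have hmx0 : m x0 = Real.exp t • v := by
    funext j
    rw [hmexp x0 hx0pos j]
    simp only [hlogx0]
    rw [hj j, Real.exp_add, Real.exp_log (hv j)]
    rfl
  have hFx0 : F x0 = 0 := by
    rw [hFm, hmx0, Matrix.mulVec_smul, hvker, smul_zero]
  constructor
  · refine ⟨x0, ⟨hx0pos, hFx0⟩, ?_⟩
    rintro x ⟨hxp, hxF⟩
    obtain ⟨c, hc0, hcm, hxb⟩ := hchar x hxp hxF
    have h7 : D.mulVec ((fun k => Real.log (x k)) - y0) = 0 := by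
      rw [Matrix.mulVec_sub, hxb, hy0b, sub_self]
    have h8 := hDinj _ h7
    funext k
    have h9 : Real.log (x k) - y0 k = 0 := congrFun h8 k
    have : Real.log (x k) = y0 k := by linarith
    calc x k = Real.exp (Real.log (x k)) := (Real.exp_log (hxp k)).symm
    _ = Real.exp (y0 k) := by rw [this]
    _ = x0 k := rfl
  · intro x hxp hxF
    obtain ⟨c, hc0, hcm, -⟩ := hchar x hxp hxF
    set M : Matrix (Fin (n + 1)) (Fin n) ℝ := Matrix.of fun j k => m x j * α j k / x k with hM
    have hmj : ∀ j, HasFDerivAt (fun y : Fin n → ℝ => m y j)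
        (∑ k, (m x j * α j k / x k) • (ContinuousLinearMap.proj k : (Fin n → ℝ) →L[ℝ] ℝ)) x := by
      intro j
      have h1 : ∀ k ∈ Finset.univ, HasFDerivAt (fun y : Fin n → ℝ => y k ^ α j k)
          ((α j k * x k ^ (α j k - 1)) • (ContinuousLinearMap.proj k : (Fin n → ℝ) →L[ℝ] ℝ)) x :=
        fun k _ => (hasFDerivAt_apply k x).rpow_const (Or.inl (ne_of_gt (hxp k)))
      have h2 := HasFDerivAt.finset_prod h1
      refine h2.congr_fderiv ?_
      refine Finset.sum_congr rfl fun k _ => ?_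
      rw [smul_smul]
      congr 1
      have h3 : m x j = x k ^ α j k * ∏ k' ∈ Finset.univ.erase k, x k' ^ α j k' :=
        (Finset.mul_prod_erase _ _ (Finset.mem_univ k)).symm
      rw [h3, Real.rpow_sub_one (ne_of_gt (hxp k))]
      field_simp
    have hFi : ∀ i, HasFDerivAt (fun y => F y i)
        (∑ j, N i j • (∑ k, (m x j * α j k / x k) •
          (ContinuousLinearMap.proj k : (Fin n → ℝ) →L[ℝ] ℝ))) x := by
      intro i
      exact HasFDerivAt.fun_sum fun j _ => ((hmj j).const_mul (N i j))
    set L : (Fin n → ℝ) →L[ℝ] (Fin n → ℝ) :=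
      LinearMap.toContinuousLinearMap (Matrix.toLin' (N * M)) with hL
    have hFD : HasFDerivAt F L x := by
      apply hasFDerivAt_pi''
      intro i
      refine (hFi i).congr_fderiv ?_
      ext u
      simp only [ContinuousLinearMap.sum_apply, ContinuousLinearMap.smul_apply,
        ContinuousLinearMap.proj_apply, smul_eq_mul, ContinuousLinearMap.comp_apply,
        hL, LinearMap.coe_toContinuousLinearMap', Matrix.toLin'_apply, Matrix.mulVec,
        dotProduct, Matrix.mul_apply, Finset.sum_mul, Finset.mul_sum]
      rw [Finset.sum_comm]
      refine Finset.sum_congr rfl fun k _ => Finset.sum_congr rfl fun j _ => ?_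
      simp [hM]
      ring
    rw [hFD.fderiv]
    have hcoe : ((L : (Fin n → ℝ) →L[ℝ] (Fin n → ℝ)) : (Fin n → ℝ) →ₗ[ℝ] (Fin n → ℝ))
        = Matrix.toLin' (N * M) := by
      rw [hL]; exact LinearMap.coe_toContinuousLinearMap _
    rw [hcoe, LinearMap.det_toLin']
    set A : Matrix (Fin (n + 1)) (Fin n) ℝ := Matrix.of fun j k => α j k with hA
    set P : Matrix (Fin n) (Fin n) ℝ := N * Matrix.diagonal v * A with hP
    have hPdet : P.det ≠ 0 := by
      intro h0
      obtain ⟨y, hy0, hy⟩ := (Matrix.exists_mulVec_eq_zero_iff).2 h0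
      set w : Fin (n + 1) → ℝ := A.mulVec y with hw
      have h1 : N.mulVec (fun j => v j * w j) = 0 := by
        have h2 : P.mulVec y = N.mulVec ((Matrix.diagonal v).mulVec w) := by
          rw [hw, Matrix.mulVec_mulVec, Matrix.mulVec_mulVec, hP]
        have h3 : (Matrix.diagonal v).mulVec w = fun j => v j * w j := by
          funext j; exact Matrix.mulVec_diagonal v w j
        rw [← h3, ← h2, hy]
      obtain ⟨s, hs⟩ := hker _ h1
      have hwj : ∀ j, w j = s := by
        intro j
        have h4 := congrFun hs j
        simp only [Pi.smul_apply, smul_eq_mul] at h4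
        have h5 := hv j
        nlinarith [h4]
      have hDy : D.mulVec y = 0 := by
        funext r
        have h6 : D.mulVec y r = w r.succ - w 0 := by
          simp [hD, hw, hA, Matrix.mulVec, dotProduct, sub_mul,
            Finset.sum_sub_distrib]
        have h7 : (0 : Fin n → ℝ) r = 0 := rfl
        rw [h6, hwj, hwj, sub_self, h7]
      exact hy0 (hDinj y hDy)
    have hMfac : M = Matrix.diagonal (fun j => c * v j) * A
        * Matrix.diagonal (fun k => (x k)⁻¹) := by
      ext j k
      rw [Matrix.mul_diagonal, Matrix.diagonal_mul]
      have h8 : m x j = c * v j := by rw [hcm]; rfl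
      simp [hM, hA, h8, div_eq_mul_inv]
    have hdc : Matrix.diagonal (fun j => c * v j) = c • Matrix.diagonal v := by
      rw [← Matrix.diagonal_smul]; rfl
    have hfac : N * M = (c • P) * Matrix.diagonal (fun k => (x k)⁻¹) := by
      rw [hMfac, hdc, hP]
      simp only [Matrix.smul_mul, Matrix.mul_smul, Matrix.mul_assoc]
    rw [hfac, Matrix.det_mul, Matrix.det_smul, Matrix.det_diagonal]
    refine mul_ne_zero (mul_ne_zero ?_ hPdet) ?_
    · exact pow_ne_zero _ (ne_of_gt hc0)
    · exact Finset.prod_ne_zero_iff.2 fun k _ => inv_ne_zero (ne_of_gt (hxp k))
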